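/- arXiv:2405.19280 — 4 statements merged into one kernel-verified Lean document; each statement's English description precedes it below -/
import Mathlib

section
/- Let B^n = ∏_{i=1}^n [[b_i,1],[1,0]] be the path matrix with entries in the free noncommutative algebra over F_2, and let ℓ denote the number of monomials in the support. For every odd n ≥ 1, ℓ(1 + B^n_{11}) = F_{n+1} + 1, and this number is even if and only if n is not congruent to 2 modulo 3. -/
/-- The free noncommutative algebra over `ZMod 2` on countably many
indeterminates, realized as the monoid algebra of the free monoid on `ℕ`. -/
noncomputable abbrev A := MonoidAlgebra (ZMod 2) (FreeMonoid ℕ)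

/-- The `i`-th indeterminate `b_i`. -/
noncomputable def b (i : ℕ) : A := MonoidAlgebra.single (FreeMonoid.of i) 1

/-- The elementary path matrix `[[b_i, 1], [1, 0]]`. -/
noncomputable def PM (i : ℕ) : Matrix (Fin 2) (Fin 2) A := !![b i, 1; 1, 0]

/-- The path matrix `B^n = ∏_{i=1}^n [[b_i, 1], [1, 0]]` (ordered product). -/
noncomputable def B (n : ℕ) : Matrix (Fin 2) (Fin 2) A :=
  ((List.range n).map (fun i => PM (i + 1))).prod

/-- The number of monomials in the support of `p`. -/
noncomputable def ell (p : A) : ℕ := p.coeff.support.card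

instance : DecidableEq (FreeMonoid ℕ) := inferInstanceAs (DecidableEq (List ℕ))

/-- The continuant polynomial `q n = B^n₀₀`. -/
noncomputable def q : ℕ → A
  | 0 => 1
  | 1 => b 1
  | (n+2) => q (n+1) * b (n+2) + q n

lemma B_succ (n : ℕ) : B (n+1) = B n * PM (n+1) := by
  simp [B, List.range_succ]

lemma B_succ_01 (n : ℕ) : B (n+1) 0 1 = B n 0 0 := by
  rw [B_succ]
  simp [PM, Matrix.mul_apply, Fin.sum_univ_two]

lemma B_succ_00 (n : ℕ) : B (n+1) 0 0 = B n 0 0 * b (n+1) + B n 0 1 := by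
  rw [B_succ]
  simp [PM, Matrix.mul_apply, Fin.sum_univ_two]

lemma B00 : ∀ n : ℕ, B n 0 0 = q n := by
  intro n
  induction n using Nat.strong_induction_on with
  | _ n ih =>
    match n with
    | 0 => simp [B, q]
    | 1 =>
      rw [B_succ_00]
      simp [B, q]
    | (m+2) =>
      rw [B_succ_00, B_succ_01, ih (m+1) (by omega), ih m (by omega)]
      rfl

lemma mul_b (p : A) (i : ℕ) :
    (p * b i).coeff = Finsupp.mapDomain (· * FreeMonoid.of i) p.coeff := by
  rw [b, MonoidAlgebra.mul_def, Finsupp.mapDomain, MonoidAlgebra.coeff_finsuppSum]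
  refine Finsupp.sum_congr fun g hg => ?_
  rw [MonoidAlgebra.coeff_single, Finsupp.sum_single_index (by simp)]
  simp [MonoidAlgebra.coeff_single]

lemma support_mul_b (p : A) (i : ℕ) :
    (p * b i).coeff.support = p.coeff.support.image (· * FreeMonoid.of i) := by
  rw [mul_b]
  exact Finsupp.mapDomain_support_of_injective (mul_left_injective _) _

lemma key : ∀ n : ℕ, (q n).coeff.support.card = Nat.fib (n+1) ∧
    ∀ w ∈ (q n).coeff.support,
      (FreeMonoid.toList w).length % 2 = n % 2 ∧ ∀ x ∈ FreeMonoid.toList w, x ≤ n := by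
  intro n
  induction n using Nat.strong_induction_on with
  | _ n ih =>
    match n with
    | 0 =>
      have h0 : (q 0).coeff.support = {1} :=
        Finsupp.support_single_ne_zero (1 : FreeMonoid ℕ) (one_ne_zero (α := ZMod 2))
      rw [h0]
      refine ⟨rfl, ?_⟩
      intro w hw
      simp only [Finset.mem_singleton] at hw
      subst hw
      rw [FreeMonoid.toList_one]
      exact ⟨rfl, by simp⟩
    | 1 =>
      have h1 : (q 1).coeff.support = {FreeMonoid.of 1} :=
        Finsupp.support_single_ne_zero (FreeMonoid.of 1) (one_ne_zero (α := ZMod 2))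
      rw [h1]
      refine ⟨rfl, ?_⟩
      intro w hw
      simp only [Finset.mem_singleton] at hw
      subst hw
      rw [FreeMonoid.toList_of]
      exact ⟨rfl, by simp⟩
    | (m+2) =>
      obtain ⟨hc1, hp1⟩ := ih (m+1) (by omega)
      obtain ⟨hc0, hp0⟩ := ih m (by omega)
      have hq : q (m+2) = q (m+1) * b (m+2) + q m := rfl
      have hS : (q (m+1) * b (m+2)).coeff.support
          = (q (m+1)).coeff.support.image (· * FreeMonoid.of (m+2)) := support_mul_b _ _
      have hmem : ∀ w ∈ (q (m+1) * b (m+2)).coeff.support,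
          (m+2) ∈ FreeMonoid.toList w := by
        intro w hw
        rw [hS, Finset.mem_image] at hw
        obtain ⟨v, hv, rfl⟩ := hw
        rw [FreeMonoid.toList_mul, FreeMonoid.toList_of]
        simp
      have hdisj : Disjoint (q (m+1) * b (m+2)).coeff.support (q m).coeff.support := by
        rw [Finset.disjoint_left]
        intro w hw hw'
        have h1 := hmem w hw
        have h2 := (hp0 w hw').2 (m+2) h1
        omega
      have hsupp : (q (m+2)).coeff.support
          = (q (m+1) * b (m+2)).coeff.support ∪ (q m).coeff.support := by
        rw [hq, MonoidAlgebra.coeff_add]; exact Finsupp.support_add_eq hdisj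
      constructor
      · rw [hsupp, Finset.card_union_of_disjoint hdisj, hS,
          Finset.card_image_of_injective _ (mul_left_injective _), hc1, hc0]
        show Nat.fib (m+2) + Nat.fib (m+1) = Nat.fib (m+3)
        have : Nat.fib (m+3) = Nat.fib (m+1) + Nat.fib (m+2) := Nat.fib_add_two
        omega
      · intro w hw
        rw [hsupp, Finset.mem_union] at hw
        rcases hw with hw | hw
        · rw [hS, Finset.mem_image] at hw
          obtain ⟨v, hv, rfl⟩ := hw
          obtain ⟨hl, hx⟩ := hp1 v hv
          rw [FreeMonoid.toList_mul, FreeMonoid.toList_of]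
          constructor
          · simp only [List.length_append, List.length_singleton]
            omega
          · intro x hx'
            rw [List.mem_append] at hx'
            rcases hx' with h | h
            · exact le_trans (hx x h) (by omega)
            · simp at h
              omega
        · obtain ⟨hl, hx⟩ := hp0 w hw
          exact ⟨by omega, fun x h => le_trans (hx x h) (by omega)⟩

lemma fib_mod_two (n : ℕ) : Nat.fib n % 2 = if n % 3 = 0 then 0 else 1 := by
  induction n using Nat.strong_induction_on with
  | _ n ih =>
    match n with
    | 0 => simp
    | 1 => simp
    | 2 => simp
    | (m+3) =>
      have h1 := ih m (by omega)
      have e : Nat.fib (m+3) = Nat.fib (m+1) + Nat.fib (m+2) := Nat.fib_add_two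
      have e2 : Nat.fib (m+2) = Nat.fib m + Nat.fib (m+1) := Nat.fib_add_two
      have h2 : Nat.fib (m+3) % 2 = Nat.fib m % 2 := by omega
      have h3 : (m+3) % 3 = m % 3 := by omega
      rw [h2, h1, h3]

/-- For odd , the length of  is , which
is even iff  is not congruent to  mod . -/
theorem length_differential_a1 (n : ℕ) (hn : 1 ≤ n) (hodd : Odd n) :
    ell (1 + B n 0 0) = Nat.fib (n + 1) + 1 ∧
    (Even (Nat.fib (n + 1) + 1) ↔ ¬ n % 3 = 2) := by
  obtain ⟨hc, hp⟩ := key n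
  have hB : B n 0 0 = q n := B00 n
  constructor
  · have hone : (1 : A) = MonoidAlgebra.single 1 1 := rfl
    have hsup1 : (MonoidAlgebra.single (1 : FreeMonoid ℕ) (1 : ZMod 2)).coeff.support = {1} :=
      Finsupp.support_single_ne_zero _ one_ne_zero
    have hnot : (1 : FreeMonoid ℕ) ∉ (q n).coeff.support := by
      intro h
      have hlen := (hp 1 h).1
      rw [FreeMonoid.toList_one] at hlen
      simp only [List.length_nil] at hlen
      obtain ⟨k, hk⟩ := hodd
      omega
    have hdisj : Disjoint (MonoidAlgebra.single (1 : FreeMonoid ℕ)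
        (1 : ZMod 2)).coeff.support (q n).coeff.support := by
      rw [hsup1, Finset.disjoint_left]
      intro w hw
      simp only [Finset.mem_singleton] at hw
      subst hw
      exact hnot
    rw [hB, ell, hone, MonoidAlgebra.coeff_add, Finsupp.support_add_eq hdisj,
      Finset.card_union_of_disjoint hdisj, hsup1, hc, Finset.card_singleton]
    omega
  · have h := fib_mod_two (n+1)
    rw [Nat.even_add_one, Nat.even_iff]
    by_cases h3 : (n+1) % 3 = 0
    · rw [if_pos h3] at h
      constructor <;> intro _ <;> omega
    · rw [if_neg h3] at h
      constructor <;> intro _ <;> omega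
end

section
/- Let B^n = ∏_{i=1}^n [[b_i,1],[1,0]] be the path matrix with entries in the free noncommutative algebra over F_2, and let ℓ denote the number of monomials in the support. For every odd n ≥ 3, ℓ(1 + B^n_{22} + B^n_{21}·B^n_{12}) = F_{n-1} + F_n^2 − 1. -/
namespace TorusKnot

open MonoidAlgebra Finset FreeMonoid

instance : DecidableEq (FreeMonoid ℕ) :=
  fun a b => decidable_of_iff (toList a = toList b) FreeMonoid.toList.injective.eq_iff

/-- Continuant polynomial on variables `b_a, ..., b_{a+m-1}`. -/
noncomputable def K : ℕ → ℕ → A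
  | _, 0 => 1
  | a, 1 => b a
  | a, (m+2) => K a (m+1) * b (a+m+1) + K a m

/-- Support words of the continuant. -/
def S : ℕ → ℕ → Finset (FreeMonoid ℕ)
  | _, 0 => {1}
  | a, 1 => {FreeMonoid.of a}
  | a, (m+2) => (S a (m+1)).image (· * FreeMonoid.of (a+m+1)) ∪ S a m

/-- Structural facts about words in `S a m`. -/
lemma S_spec : ∀ m a (w : FreeMonoid ℕ), w ∈ S a m →
    w.toList.length % 2 = m % 2 ∧
    (∀ x ∈ w.toList, x < a + m) ∧
    (∀ j, (h : j < w.toList.length) → getElem w.toList j h % 2 = (a + j) % 2) := by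
  intro m
  induction m using Nat.strong_induction_on with
  | _ m ih =>
    match m with
    | 0 =>
      intro a w hw
      simp only [S, mem_singleton] at hw
      subst hw
      simp [toList_one]
    | 1 =>
      intro a w hw
      simp only [S, mem_singleton] at hw
      subst hw
      refine ⟨by simp [toList_of], by simp [toList_of], ?_⟩
      intro j h
      simp only [toList_of, List.length_singleton] at h
      interval_cases j
      simp [toList_of]
    | (m+2) =>
      intro a w hw
      simp only [S, mem_union, mem_image] at hw
      rcases hw with ⟨w', hw', rfl⟩ | hw
      · obtain ⟨hlen, hbd, hpar⟩ := ih (m+1) (by omega) a w' hw'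
        have hL : (w' * FreeMonoid.of (a+m+1)).toList = w'.toList ++ [a+m+1] := by
          simp [toList_mul, toList_of]
        refine ⟨?_, ?_, ?_⟩
        · rw [hL]; simp only [List.length_append, List.length_singleton]; omega
        · intro x hx
          rw [hL] at hx
          rcases List.mem_append.mp hx with hx | hx
          · have := hbd x hx; omega
          · simp at hx; omega
        · intro j h
          simp only [hL] at h ⊢
          simp only [List.length_append, List.length_singleton] at h
          rcases lt_or_ge j w'.toList.length with hj | hj
          · rw [List.getElem_append_left hj]
            exact hpar j hj
          · have hj' : j - w'.toList.length = 0 := by omega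
            have hj2 : j = w'.toList.length := by omega
            rw [List.getElem_append_right hj]
            simp only [hj', List.getElem_cons_zero]
            omega
      · obtain ⟨hlen, hbd, hpar⟩ := ih m (by omega) a w hw
        exact ⟨by omega, fun x hx => by have := hbd x hx; omega, hpar⟩

end TorusKnot

namespace TorusKnot

open MonoidAlgebra Finset FreeMonoid

lemma mul_of_injective (c : ℕ) :
    Function.Injective (fun w : FreeMonoid ℕ => w * FreeMonoid.of c) := by
  intro u v h
  apply FreeMonoid.toList.injective
  have h' := congrArg FreeMonoid.toList h
  simp only [toList_mul, toList_of] at h'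
  exact (List.append_inj h' (by
    have := congrArg List.length h'
    simp at this; omega)).1

lemma S_disj (a m : ℕ) :
    Disjoint ((S a (m+1)).image (· * FreeMonoid.of (a+m+1))) (S a m) := by
  rw [Finset.disjoint_left]
  rintro w hw hw'
  obtain ⟨w', _, rfl⟩ := Finset.mem_image.mp hw
  have hbd := (S_spec m a _ hw').2.1 (a+m+1) (by simp [toList_mul, toList_of])
  omega

lemma card_S : ∀ m a, (S a m).card = Nat.fib (m+1) := by
  intro m
  induction m using Nat.strong_induction_on with
  | _ m ih =>
    match m with
    | 0 => intro a; simp [S]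
    | 1 => intro a; simp [S]
    | (m+2) =>
      intro a
      rw [S, Finset.card_union_of_disjoint (S_disj a m),
        Finset.card_image_of_injective _ (mul_of_injective _),
        ih (m+1) (by omega), ih m (by omega)]
      simp [Nat.fib_add_two]
      omega

lemma one_mem_S : ∀ m a, m % 2 = 0 → (1 : FreeMonoid ℕ) ∈ S a m := by
  intro m
  induction m using Nat.strong_induction_on with
  | _ m ih =>
    match m with
    | 0 => intro a _; simp [S]
    | 1 => intro a h; omega
    | (m+2) =>
      intro a h
      rw [S]
      exact Finset.mem_union_right _ (ih m (by omega) a (by omega))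

lemma K_eq : ∀ m a, K a m = ∑ w ∈ S a m, MonoidAlgebra.single w (1 : ZMod 2) := by
  intro m
  induction m using Nat.strong_induction_on with
  | _ m ih =>
    match m with
    | 0 => intro a; simp [K, S, MonoidAlgebra.one_def]
    | 1 => intro a; simp [K, S, b]
    | (m+2) =>
      intro a
      rw [K, S, ih (m+1) (by omega), ih m (by omega),
        Finset.sum_union (S_disj a m), b, Finset.sum_mul]
      congr 1
      rw [Finset.sum_image (fun x _ y _ h => mul_of_injective _ h)]
      refine Finset.sum_congr rfl fun w _ => ?_
      rw [MonoidAlgebra.single_mul_single, mul_one]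

lemma K_succ (a m : ℕ) : K a (m+2) = K a (m+1) * b (a+m+1) + K a m := by rw [K]

lemma B_succ (n : ℕ) : B (n+1) = B n * PM (n+1) := by
  unfold B
  rw [List.range_succ, List.map_append, List.prod_append]
  simp

lemma B_entries : ∀ m, B (m+2) 0 0 = K 1 (m+2) ∧ B (m+2) 0 1 = K 1 (m+1) ∧
    B (m+2) 1 0 = K 2 (m+1) ∧ B (m+2) 1 1 = K 2 m := by
  intro m
  induction m with
  | zero =>
    have h2 : B 2 = PM 1 * PM 2 := by
      rw [B_succ, B_succ]; unfold B; simp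
    rw [h2]
    refine ⟨?_, ?_, ?_, ?_⟩ <;>
      simp [PM, Matrix.mul_apply, Fin.sum_univ_two, K, b]
  | succ m ih =>
    obtain ⟨h00, h01, h10, h11⟩ := ih
    have h : B (m+3) = B (m+2) * PM (m+3) := B_succ (m+2)
    have e00 : B (m+3) 0 0 = B (m+2) 0 0 * b (m+3) + B (m+2) 0 1 := by
      rw [h]; simp [PM, Matrix.mul_apply, Fin.sum_univ_two]
    have e01 : B (m+3) 0 1 = B (m+2) 0 0 := by
      rw [h]; simp [PM, Matrix.mul_apply, Fin.sum_univ_two]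
    have e10 : B (m+3) 1 0 = B (m+2) 1 0 * b (m+3) + B (m+2) 1 1 := by
      rw [h]; simp [PM, Matrix.mul_apply, Fin.sum_univ_two]
    have e11 : B (m+3) 1 1 = B (m+2) 1 0 := by
      rw [h]; simp [PM, Matrix.mul_apply, Fin.sum_univ_two]
    refine ⟨?_, ?_, ?_, ?_⟩
    · rw [e00, h00, h01]
      have hK := K_succ 1 (m+1)
      simp only [show m+1+2 = m+3 from by omega, show m+1+1 = m+2 from by omega,
        show 1+(m+1)+1 = m+3 from by omega] at hK
      rw [hK]
    · rw [e01, h00]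
    · rw [e10, h10, h11]
      have hK := K_succ 2 m
      simp only [show 2+m+1 = m+3 from by omega] at hK
      rw [hK]
    · rw [e11, h10]

lemma support_sum_single (U : Finset (FreeMonoid ℕ)) :
    (∑ u ∈ U, (MonoidAlgebra.single u (1 : ZMod 2) : A)).coeff.support = U := by
  rw [MonoidAlgebra.coeff_sum, Finsupp.support_sum_eq_biUnion]
  · conv_rhs => rw [← Finset.biUnion_singleton_eq_self (s := U)]
    refine Finset.biUnion_congr rfl fun u _ => ?_
    exact Finsupp.support_single_ne_zero u one_ne_zero
  · intro i j hij
    simp only [MonoidAlgebra.coeff_single]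
    rw [Finsupp.support_single_ne_zero i one_ne_zero,
      Finsupp.support_single_ne_zero j one_ne_zero]
    exact Finset.disjoint_singleton.mpr hij

end TorusKnot

namespace TorusKnot

open MonoidAlgebra Finset FreeMonoid

lemma not_lt_len {m : ℕ} (hm : m % 2 = 0) {w v w' v' : FreeMonoid ℕ}
    (hw : w ∈ S 2 m) (hv : v ∈ S 1 m) (hw' : w' ∈ S 2 m) (hv' : v' ∈ S 1 m)
    (heq : w.toList ++ v.toList = w'.toList ++ v'.toList) :
    ¬ w.toList.length < w'.toList.length := by
  intro hlt
  obtain ⟨hwl, -, -⟩ := S_spec m 2 w hw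
  obtain ⟨-, -, hvp⟩ := S_spec m 1 v hv
  obtain ⟨-, -, hw'p⟩ := S_spec m 2 w' hw'
  have hlen : w.toList.length + v.toList.length
      = w'.toList.length + v'.toList.length := by
    have := congrArg List.length heq; simpa using this
  have hvpos : 0 < v.toList.length := by omega
  have h1 : w.toList.length < (w.toList ++ v.toList).length := by
    simp; omega
  have e1 : getElem (w.toList ++ v.toList) w.toList.length h1 = getElem v.toList 0 hvpos := by
    rw [List.getElem_append_right (le_refl _)]
    simp
  have e2 : getElem (w.toList ++ v.toList) w.toList.length h1
      = getElem w'.toList w.toList.length hlt := by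
    simp only [heq]
    exact List.getElem_append_left hlt
  have p1 := hvp 0 hvpos
  have p2 := hw'p w.toList.length hlt
  rw [e1] at e2
  omega

theorem length_differential_a2' (n : ℕ) (hn : 3 ≤ n) (hodd : Odd n) :
    ell (1 + B n 1 1 + B n 1 0 * B n 0 1) = Nat.fib (n - 1) + (Nat.fib n) ^ 2 - 1 := by
  obtain ⟨m, rfl⟩ : ∃ m, n = m + 3 := ⟨n - 3, by omega⟩
  have hm : m % 2 = 0 := by
    have := Nat.odd_iff.mp hodd; omega
  obtain ⟨h00, h01, h10, h11⟩ := B_entries (m+1)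
  simp only [show m+1+2 = m+3 from by omega, show m+1+1 = m+2 from by omega]
    at h00 h01 h10 h11
  set T := ((S 2 (m+2)) ×ˢ (S 1 (m+2))).image
    (fun p : FreeMonoid ℕ × FreeMonoid ℕ => p.1 * p.2) with hT
  have hinj : ∀ p ∈ S 2 (m+2) ×ˢ S 1 (m+2), ∀ q ∈ S 2 (m+2) ×ˢ S 1 (m+2),
      p.1 * p.2 = q.1 * q.2 → p = q := by
    rintro ⟨w, v⟩ hp ⟨w', v'⟩ hq h
    rw [Finset.mem_product] at hp hq
    dsimp only at hp hq h
    have heq : w.toList ++ v.toList = w'.toList ++ v'.toList := by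
      have := congrArg FreeMonoid.toList h; simpa [toList_mul] using this
    have hme : (m+2) % 2 = 0 := by omega
    have h1 := not_lt_len hme hp.1 hp.2 hq.1 hq.2 heq
    have h2 := not_lt_len hme hq.1 hq.2 hp.1 hp.2 heq.symm
    have hlen : w.toList.length = w'.toList.length := by omega
    obtain ⟨e1, e2⟩ := List.append_inj heq hlen
    have hww : w = w' := FreeMonoid.toList.injective e1
    have hvv : v = v' := FreeMonoid.toList.injective e2
    simp [hww, hvv]
  have hprod : K 2 (m+2) * K 1 (m+2)
      = ∑ u ∈ T, MonoidAlgebra.single u (1 : ZMod 2) := by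
    rw [K_eq, K_eq, Finset.sum_mul_sum, hT, Finset.sum_image hinj,
      Finset.sum_product]
    exact Finset.sum_congr rfl fun w _ => Finset.sum_congr rfl fun v _ => by
      rw [MonoidAlgebra.single_mul_single, one_mul]
  have honeT : (1 : FreeMonoid ℕ) ∈ T := by
    rw [hT]
    exact Finset.mem_image.mpr ⟨(1, 1), Finset.mem_product.mpr
      ⟨one_mem_S _ 2 (by omega), one_mem_S _ 1 (by omega)⟩, one_mul 1⟩
  have hTeven : ∀ u ∈ T, u.toList.length % 2 = 0 := by
    intro u hu
    rw [hT, Finset.mem_image] at hu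
    obtain ⟨⟨w, v⟩, hp, rfl⟩ := hu
    rw [Finset.mem_product] at hp
    have h1 := (S_spec (m+2) 2 w hp.1).1
    have h2 := (S_spec (m+2) 1 v hp.2).1
    simp only [toList_mul, List.length_append]
    omega
  have hTcard : T.card = Nat.fib (m+3) ^ 2 := by
    rw [hT, Finset.card_image_of_injOn (fun p hp q hq h => hinj p hp q hq h),
      Finset.card_product, card_S, card_S]
    simp only [show m+2+1 = m+3 from rfl]
    rw [pow_two]
  have hdisj : Disjoint (S 2 (m+1)) (T.erase 1) := by
    rw [Finset.disjoint_left]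
    intro u hu hu'
    have h1 := (S_spec (m+1) 2 u hu).1
    have h2 := hTeven u (Finset.mem_of_mem_erase hu')
    omega
  have key : (1 + B (m+3) 1 1 + B (m+3) 1 0 * B (m+3) 0 1) =
      ∑ u ∈ S 2 (m+1) ∪ T.erase 1, MonoidAlgebra.single u (1 : ZMod 2) := by
    rw [h11, h10, h01, hprod, K_eq, ← Finset.add_sum_erase T _ honeT,
      MonoidAlgebra.one_def, Finset.sum_union hdisj]
    rw [add_add_add_comm]
    have hcancel : (MonoidAlgebra.single (1 : FreeMonoid ℕ) (1 : ZMod 2) : A)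
        + MonoidAlgebra.single 1 1 = 0 := by
      rw [← MonoidAlgebra.single_add, show (1 : ZMod 2) + 1 = 0 from by decide,
        MonoidAlgebra.single_zero]
    rw [hcancel, zero_add]
  show (1 + B (m+3) 1 1 + B (m+3) 1 0 * B (m+3) 0 1).coeff.support.card = _
  rw [key, support_sum_single, Finset.card_union_of_disjoint hdisj, card_S,
    Finset.card_erase_of_mem honeT, hTcard]
  have hfib : 1 ≤ Nat.fib (m+3) ^ 2 :=
    Nat.one_le_iff_ne_zero.mpr (pow_ne_zero _ (Nat.fib_pos.mpr (by omega)).ne')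
  simp only [show m+3-1 = m+2 from rfl, show m+1+1 = m+2 from rfl]
  generalize Nat.fib (m+3) ^ 2 = F at hfib ⊢
  omega

end TorusKnot

/-- For odd , the length of  is
. -/
theorem length_differential_a2 (n : ℕ) (hn : 3 ≤ n) (hodd : Odd n) :
    ell (1 + B n 1 1 + B n 1 0 * B n 0 1) = Nat.fib (n - 1) + (Nat.fib n) ^ 2 - 1 :=
  TorusKnot.length_differential_a2' n hn hodd
end

section
/- Let W_1, …, W_k be elements of the free noncommutative algebra over F_2 on an indexed family of indeterminates, such that: each W_i has zero constant term, the sets of indeterminates occurring in the monomials of the W_i are pairwise disjoint, and each W_i has an odd number of monomials in its support. Then the element 1 + W_1·W_2·⋯·W_k has an even number of monomials in its support, namely 1 + ∏_i ℓ(W_i). -/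
/-- The set of indeterminates occurring in the monomials of `p`. -/
noncomputable def lettersOf (p : A) : Set ℕ :=
  {x | ∃ w ∈ p.coeff.support, x ∈ FreeMonoid.toList w}

/-- The number of occurrences of the letter `i` in the word `w`. -/
def countLetter (i : ℕ) (w : FreeMonoid ℕ) : ℕ := (FreeMonoid.toList w).count i

/-- The maximal number of occurrences of the letter `i` in a word of the
support of `p`. -/
noncomputable def maxLetter (i : ℕ) (p : A) : ℕ := p.coeff.support.sup (countLetter i)

/-- The number of words in the support of `p` containing exactly
`maxLetter i p` occurrences of the letter `i`. -/
noncomputable def tau (i : ℕ) (p : A) : ℕ :=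
  (p.coeff.support.filter (fun w => countLetter i w = maxLetter i p)).card

lemma mem_lettersOf {p : A} {w : FreeMonoid ℕ} (hw : w ∈ p.coeff.support) {x : ℕ}
    (hx : x ∈ FreeMonoid.toList w) : x ∈ lettersOf p := ⟨w, hw, hx⟩

lemma concat_inj {S T : Set ℕ} (hST : Disjoint S T) {u u' v v' : FreeMonoid ℕ}
    (hu : ∀ x ∈ FreeMonoid.toList u, x ∈ S) (hu' : ∀ x ∈ FreeMonoid.toList u', x ∈ S)
    (hv : ∀ x ∈ FreeMonoid.toList v, x ∈ T) (hv' : ∀ x ∈ FreeMonoid.toList v', x ∈ T)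
    (h : u * v = u' * v') : u = u' ∧ v = v' := by
  have h' : FreeMonoid.toList u ++ FreeMonoid.toList v
      = FreeMonoid.toList u' ++ FreeMonoid.toList v' := by
    simpa [FreeMonoid.toList_mul] using congrArg FreeMonoid.toList h
  have key : FreeMonoid.toList u = FreeMonoid.toList u' := by
    rcases List.append_eq_append_iff.mp h' with ⟨t, h1, h2⟩ | ⟨t, h1, h2⟩
    · rcases t with _ | ⟨x, t⟩
      · simpa using h1.symm
      · exfalso
        have hxS : x ∈ S := hu' x (by rw [h1]; simp)
        have hxT : x ∈ T := hv x (by rw [h2]; simp)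
        exact hST.le_bot ⟨hxS, hxT⟩ |>.elim
    · rcases t with _ | ⟨x, t⟩
      · simpa using h1
      · exfalso
        have hxS : x ∈ S := hu x (by rw [h1]; simp)
        have hxT : x ∈ T := hv' x (by rw [h2]; simp)
        exact hST.le_bot ⟨hxS, hxT⟩ |>.elim
  have hu_eq : u = u' := FreeMonoid.toList.injective key
  refine ⟨hu_eq, ?_⟩
  subst hu_eq
  exact mul_left_cancel h

lemma ell_mul {p q : A} (h : Disjoint (lettersOf p) (lettersOf q)) :
    ell (p * q) = ell p * ell q := by
  classical
  have hsupp : (p * q).coeff.support = (p.coeff.support ×ˢ q.coeff.support).image (fun ab => ab.1 * ab.2) := by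
    apply Finset.Subset.antisymm
    · intro x hx
      have := MonoidAlgebra.support_coeff_mul_subset p q hx
      rw [Finset.mem_mul] at this
      obtain ⟨a, ha, c, hc, rfl⟩ := this
      exact Finset.mem_image.mpr ⟨(a, c), Finset.mem_product.mpr ⟨ha, hc⟩, rfl⟩
    · intro x hx
      obtain ⟨⟨u, v⟩, huv, rfl⟩ := Finset.mem_image.mp hx
      rw [Finset.mem_product] at huv
      rw [Finsupp.mem_support_iff]
      have : (p * q).coeff (u * v) = p.coeff u * q.coeff v := by
        rw [MonoidAlgebra.coeff_mul]
        simp only [Finsupp.sum]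
        rw [← Finset.sum_product']
        rw [Finset.sum_eq_single_of_mem (u, v) (Finset.mem_product.mpr huv)]
        · simp
        · rintro ⟨a, c⟩ hac hne
          rw [Finset.mem_product] at hac
          simp only [ite_eq_right_iff]
          intro heq
          exfalso
          obtain ⟨h1, h2⟩ := concat_inj h (fun x hx => mem_lettersOf hac.1 hx)
            (fun x hx => mem_lettersOf huv.1 hx) (fun x hx => mem_lettersOf hac.2 hx)
            (fun x hx => mem_lettersOf huv.2 hx) heq
          exact hne (Prod.ext h1 h2)
      rw [this]
      exact mul_ne_zero (Finsupp.mem_support_iff.mp huv.1) (Finsupp.mem_support_iff.mp huv.2)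
  rw [ell, hsupp, Finset.card_image_of_injOn, Finset.card_product]; rfl
  rintro ⟨u, v⟩ huv ⟨u', v'⟩ huv' heq
  rw [Finset.mem_coe, Finset.mem_product] at huv huv'
  obtain ⟨h1, h2⟩ := concat_inj h (fun x hx => mem_lettersOf huv.1 hx)
    (fun x hx => mem_lettersOf huv'.1 hx) (fun x hx => mem_lettersOf huv.2 hx)
    (fun x hx => mem_lettersOf huv'.2 hx) heq
  exact Prod.ext h1 h2

lemma lettersOf_mul_subset (p q : A) : lettersOf (p * q) ⊆ lettersOf p ∪ lettersOf q := by
  classical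
  rintro x ⟨w, hw, hx⟩
  have := MonoidAlgebra.support_coeff_mul_subset p q hw
  rw [Finset.mem_mul] at this
  obtain ⟨a, ha, c, hc, rfl⟩ := this
  rw [FreeMonoid.toList_mul, List.mem_append] at hx
  rcases hx with hx | hx
  · exact Or.inl (mem_lettersOf ha hx)
  · exact Or.inr (mem_lettersOf hc hx)

lemma mul_const_term (p q : A) (hp : p.coeff 1 = 0) : (p * q).coeff 1 = 0 := by
  classical
  rw [MonoidAlgebra.coeff_mul, Finsupp.sum]
  apply Finset.sum_eq_zero
  intro a ha
  rw [Finsupp.sum]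
  apply Finset.sum_eq_zero
  intro c hc
  split_ifs with h
  · have ha1 : a = 1 := by
      have : FreeMonoid.toList a ++ FreeMonoid.toList c = [] := by
        simpa [FreeMonoid.toList_mul] using congrArg FreeMonoid.toList h
      have := List.append_eq_nil_iff.mp this
      exact FreeMonoid.toList.injective this.1
    exfalso
    exact Finsupp.mem_support_iff.mp ha (ha1 ▸ hp)
  · rfl

lemma ell_one : ell (1 : A) = 1 := by
  rw [ell, MonoidAlgebra.one_def, MonoidAlgebra.coeff_single, Finsupp.support_single_ne_zero _ one_ne_zero,
    Finset.card_singleton]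

lemma lettersOf_one : lettersOf (1 : A) = ∅ := by
  ext x
  simp only [lettersOf, Set.mem_setOf_eq, Set.mem_empty_iff_false, iff_false, not_exists]
  rintro w ⟨hw, hx⟩
  rw [MonoidAlgebra.one_def, MonoidAlgebra.coeff_single, Finsupp.support_single_ne_zero _ one_ne_zero,
    Finset.mem_singleton] at hw
  subst hw
  simp [FreeMonoid.toList_one] at hx

lemma list_key (L : List A)
    (hd : L.Pairwise (fun p q => Disjoint (lettersOf p) (lettersOf q))) :
    ell L.prod = (L.map ell).prod ∧ lettersOf L.prod ⊆ ⋃ p ∈ L, lettersOf p := by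
  induction L with
  | nil => simp [ell_one, lettersOf_one]
  | cons p L ih =>
    rw [List.pairwise_cons] at hd
    obtain ⟨hE, hS⟩ := ih hd.2
    have hdis : Disjoint (lettersOf p) (lettersOf L.prod) := by
      refine Disjoint.mono_right hS ?_
      rw [Set.disjoint_iUnion₂_right]
      exact fun q hq => hd.1 q hq
    constructor
    · rw [List.prod_cons, ell_mul hdis, hE, List.map_cons, List.prod_cons]
    · rw [List.prod_cons]
      refine (lettersOf_mul_subset p L.prod).trans ?_
      intro x hx
      rcases hx with hx | hx
      · exact Set.mem_biUnion (List.mem_cons_self (a := p) (l := L)) hx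
      · obtain ⟨q, hq, hxq⟩ := Set.mem_iUnion₂.mp (hS hx)
        exact Set.mem_biUnion (List.mem_cons_of_mem p hq) hxq

lemma ell_one_add {P : A} (hP : P.coeff 1 = 0) : ell (1 + P) = 1 + ell P := by
  classical
  have h1 : ∀ w : FreeMonoid ℕ, (1 : A).coeff w = if 1 = w then 1 else 0 := by
    intro w
    rw [MonoidAlgebra.one_def, MonoidAlgebra.coeff_single, Finsupp.single_apply]
  have hadd : ∀ w : FreeMonoid ℕ, (1 + P).coeff w = (1 : A).coeff w + P.coeff w := fun w => rfl
  have hsupp : (1 + P).coeff.support = insert 1 P.coeff.support := by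
    ext w
    simp only [Finsupp.mem_support_iff, Finset.mem_insert]
    rw [hadd]
    by_cases hw : w = 1
    · subst hw
      simp [h1, hP]
    · rw [h1 w, if_neg (fun h => hw h.symm), zero_add]
      simp [eq_comm, hw]
  rw [ell, hsupp, Finset.card_insert_of_notMem (Finsupp.notMem_support_iff.mpr hP), ell,
    add_comm]


/-- If `W 0, …, W (k-1)` have zero constant term, pairwise disjoint sets of
occurring indeterminates, and odd numbers of monomials, then
`1 + W 0 ⋯ W (k-1)` has `1 + ∏ i, ell (W i)` monomials, an even number. -/
theorem one_add_prod_even_length (k : ℕ) (hk : 1 ≤ k) (W : Fin k → A)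
    (hconst : ∀ i, (W i).coeff 1 = 0)
    (hdisj : ∀ i j, i ≠ j → Disjoint (lettersOf (W i)) (lettersOf (W j)))
    (hodd : ∀ i, Odd (ell (W i))) :
    ell (1 + (List.ofFn W).prod) = 1 + ∏ i, ell (W i) ∧
    Even (ell (1 + (List.ofFn W).prod)) := by
  have hpair : (List.ofFn W).Pairwise (fun p q => Disjoint (lettersOf p) (lettersOf q)) :=
    List.pairwise_ofFn.mpr fun i j hij => hdisj i j (ne_of_lt hij)
  obtain ⟨hE, _⟩ := list_key (List.ofFn W) hpair
  have hprodconst : (List.ofFn W).prod.coeff 1 = 0 := by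
    obtain ⟨k, rfl⟩ : ∃ k', k = k' + 1 := ⟨k - 1, (Nat.succ_pred_eq_of_pos hk).symm⟩
    rw [List.ofFn_succ, List.prod_cons]
    exact mul_const_term _ _ (hconst 0)
  have hmap : ((List.ofFn W).map ell).prod = ∏ i, ell (W i) := by
    rw [List.map_ofFn, List.prod_ofFn]
    rfl
  have heq : ell (1 + (List.ofFn W).prod) = 1 + ∏ i, ell (W i) := by
    rw [ell_one_add hprodconst, hE, hmap]
  refine ⟨heq, ?_⟩
  rw [heq]
  have : Odd (∏ i, ell (W i)) :=
    Finset.prod_induction _ Odd (fun a b => Odd.mul) odd_one fun i _ => hodd i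
  rw [add_comm]
  exact this.add_one
end

section
/- Let W be a nonzero homogeneous element (all monomials of the same positive length) of the free noncommutative algebra over F_2 whose monomials involve only letters distinct from b_1, b_2, b_3, and let ℓ(W) be the number of monomials of W. Then the element b_3 + W + W² + W b_2 b_3 W + b_1 b_2 W² + b_1 b_2 W b_2 b_3 W satisfies τ_{b_3} equal to 2·ℓ(W)² + 1, which is odd; here max_{b_3} of this element equals 1 and τ_{b_3} counts the monomials containing exactly one occurrence of b_3. -/
open scoped Pointwise

noncomputable local instance inst_s15 : DecidableEq (FreeMonoid ℕ) := Classical.decEq _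

lemma inv_mul (p q : A) {Lp Lq cp cq : ℕ}
    (hp : ∀ w ∈ p.coeff.support, (FreeMonoid.toList w).length = Lp ∧ countLetter 3 w = cp)
    (hq : ∀ w ∈ q.coeff.support, (FreeMonoid.toList w).length = Lq ∧ countLetter 3 w = cq) :
    ∀ w ∈ (p * q).coeff.support,
      (FreeMonoid.toList w).length = Lp + Lq ∧ countLetter 3 w = cp + cq := by
  intro w hw
  obtain ⟨u, hu, v, hv, rfl⟩ := Finset.mem_mul.mp (MonoidAlgebra.support_coeff_mul_subset p q hw)
  obtain ⟨h1, h2⟩ := hp u hu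
  obtain ⟨h3, h4⟩ := hq v hv
  simp [FreeMonoid.toList_mul, countLetter, List.count_append, List.length_append,
    h1, h3] at *
  omega

lemma card_mul (p q : A) (dp : ℕ)
    (hp : ∀ w ∈ p.coeff.support, (FreeMonoid.toList w).length = dp) :
    (p * q).coeff.support.card = p.coeff.support.card * q.coeff.support.card := by
  have hinj : ∀ u ∈ p.coeff.support, ∀ v ∈ q.coeff.support, ∀ u' ∈ p.coeff.support, ∀ v' ∈ q.coeff.support,
      u * v = u' * v' → u = u' ∧ v = v' := by
    intro u hu v hv u' hu' v' hv' h
    have h' : FreeMonoid.toList u ++ FreeMonoid.toList v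
        = FreeMonoid.toList u' ++ FreeMonoid.toList v' := by
      simpa [FreeMonoid.toList_mul] using congrArg FreeMonoid.toList h
    obtain ⟨e1, e2⟩ := List.append_inj h' (by rw [hp u hu, hp u' hu'])
    exact ⟨FreeMonoid.toList.injective e1, FreeMonoid.toList.injective e2⟩
  have hsupp : (p * q).coeff.support = (p.coeff.support ×ˢ q.coeff.support).image (fun x => x.1 * x.2) := by
    apply Finset.Subset.antisymm
    · intro w hw
      obtain ⟨u, hu, v, hv, rfl⟩ := Finset.mem_mul.mp (MonoidAlgebra.support_coeff_mul_subset p q hw)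
      exact Finset.mem_image.mpr ⟨(u, v), Finset.mem_product.mpr ⟨hu, hv⟩, rfl⟩
    · intro w hw
      obtain ⟨⟨u, v⟩, huv, rfl⟩ := Finset.mem_image.mp hw
      obtain ⟨hu, hv⟩ := Finset.mem_product.mp huv
      rw [Finsupp.mem_support_iff, MonoidAlgebra.coeff_mul]
      have : (Finsupp.sum p.coeff fun a₁ b₁ => Finsupp.sum q.coeff fun a₂ b₂ =>
          if a₁ * a₂ = u * v then b₁ * b₂ else 0)
          = ∑ a ∈ p.coeff.support, ∑ c ∈ q.coeff.support, if a * c = u * v then p.coeff a * q.coeff c else 0 := rfl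
      rw [this, Finset.sum_eq_single u, Finset.sum_eq_single v]
      · simp only [if_pos rfl]
        exact mul_ne_zero (Finsupp.mem_support_iff.mp hu) (Finsupp.mem_support_iff.mp hv)
      · intro c hc hne
        rw [if_neg]
        intro h
        exact hne (hinj u hu c hc u hu v hv h).2
      · intro h; exact absurd hv h
      · intro a ha hne
        apply Finset.sum_eq_zero
        intro c hc
        rw [if_neg]
        intro h
        exact hne (hinj a ha c hc u hu v hv h).1
      · intro h; exact absurd hu h
  rw [hsupp, Finset.card_image_of_injOn, Finset.card_product]
  rintro ⟨u, v⟩ huv ⟨u', v'⟩ huv' h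
  obtain ⟨hu, hv⟩ := Finset.mem_product.mp huv
  obtain ⟨hu', hv'⟩ := Finset.mem_product.mp huv'
  obtain ⟨e1, e2⟩ := hinj u hu v hv u' hu' v' hv' h
  exact Prod.ext e1 e2

lemma disj_of_inv {s t : Finset (FreeMonoid ℕ)} {Ls cs Lt ct : ℕ}
    (hs : ∀ w ∈ s, (FreeMonoid.toList w).length = Ls ∧ countLetter 3 w = cs)
    (ht : ∀ w ∈ t, (FreeMonoid.toList w).length = Lt ∧ countLetter 3 w = ct)
    (h : Ls ≠ Lt ∨ cs ≠ ct) : Disjoint s t := by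
  rw [Finset.disjoint_left]
  intro w hws hwt
  obtain ⟨e1, e2⟩ := hs w hws
  obtain ⟨e3, e4⟩ := ht w hwt
  omega

lemma b_inv (i : ℕ) : ∀ w ∈ (b i).coeff.support,
    (FreeMonoid.toList w).length = 1 ∧ countLetter 3 w = if i = 3 then 1 else 0 := by
  intro w hw
  have : (b i).coeff.support = {FreeMonoid.of i} := Finsupp.support_single_ne_zero _ one_ne_zero
  rw [this, Finset.mem_singleton] at hw
  subst hw
  constructor
  · simp [FreeMonoid.toList_of]
  · rcases eq_or_ne i 3 with h | h <;> simp [countLetter, FreeMonoid.toList_of, h, List.count_singleton]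

/-- The element computing the third-power monodromy image of `b 3` has
`max_{b_3} = 1` and an odd `τ_{b_3}`, namely `2 ℓ(W)² + 1`. -/
theorem tau_third_power_monodromy (W : A) (hW : W ≠ 0)
    (hhom : ∃ d, 0 < d ∧ ∀ w ∈ W.coeff.support, (FreeMonoid.toList w).length = d)
    (hletters : ∀ w ∈ W.coeff.support, ∀ j ∈ FreeMonoid.toList w, j ∉ ({1, 2, 3} : Set ℕ)) :
    maxLetter 3 (b 3 + W + W ^ 2 + W * b 2 * b 3 * W + b 1 * b 2 * W ^ 2 +
        b 1 * b 2 * W * b 2 * b 3 * W) = 1 ∧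
    tau 3 (b 3 + W + W ^ 2 + W * b 2 * b 3 * W + b 1 * b 2 * W ^ 2 +
        b 1 * b 2 * W * b 2 * b 3 * W) = 2 * (ell W) ^ 2 + 1 ∧
    Odd (2 * (ell W) ^ 2 + 1) := by
  obtain ⟨d, hd, hlen⟩ := hhom
  -- invariants of the basic pieces
  have hb3 : ∀ w ∈ (b 3).coeff.support, (FreeMonoid.toList w).length = 1 ∧ countLetter 3 w = 1 := by
    simpa using b_inv 3
  have hb1 : ∀ w ∈ (b 1).coeff.support, (FreeMonoid.toList w).length = 1 ∧ countLetter 3 w = 0 := by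
    simpa using b_inv 1
  have hb2 : ∀ w ∈ (b 2).coeff.support, (FreeMonoid.toList w).length = 1 ∧ countLetter 3 w = 0 := by
    simpa using b_inv 2
  have hWi : ∀ w ∈ W.coeff.support, (FreeMonoid.toList w).length = d ∧ countLetter 3 w = 0 := by
    intro w hw
    refine ⟨hlen w hw, ?_⟩
    rw [countLetter, List.count_eq_zero]
    intro h3
    exact hletters w hw 3 h3 (by simp)
  have hbcard : ∀ i, (b i).coeff.support.card = 1 := by
    intro i
    rw [show (b i).coeff.support = {FreeMonoid.of i} from Finsupp.support_single_ne_zero _ one_ne_zero]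
    simp
  -- the six pieces
  have hW2 := inv_mul W W hWi hWi
  have hWb2 := inv_mul W (b 2) hWi hb2
  have hWb2b3 := inv_mul _ (b 3) hWb2 hb3
  have hX := inv_mul _ W hWb2b3 hWi
  have hb1b2 := inv_mul (b 1) (b 2) hb1 hb2
  have hY := inv_mul _ (W ^ 2) hb1b2 (by rw [pow_two]; exact hW2)
  have hb1b2W := inv_mul _ W hb1b2 hWi
  have hb1b2Wb2 := inv_mul _ (b 2) hb1b2W hb2
  have hb1b2Wb2b3 := inv_mul _ (b 3) hb1b2Wb2 hb3
  have hZ := inv_mul _ W hb1b2Wb2b3 hWi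
  -- rewrite invariant lengths with omega-friendly numerals
  simp only [pow_two] at *
  -- cardinalities
  have cX : (W * b 2 * b 3 * W).coeff.support.card = ell W * ell W := by
    rw [card_mul _ _ (d + 1 + 1) (fun w hw => (hWb2b3 w hw).1),
      card_mul _ _ (d + 1) (fun w hw => (hWb2 w hw).1),
      card_mul _ _ d (fun w hw => (hWi w hw).1)]
    simp [ell, hbcard]
  have cZ : (b 1 * b 2 * W * b 2 * b 3 * W).coeff.support.card = ell W * ell W := by
    rw [card_mul _ _ (1 + 1 + d + 1 + 1) (fun w hw => (hb1b2Wb2b3 w hw).1),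
      card_mul _ _ (1 + 1 + d + 1) (fun w hw => (hb1b2Wb2 w hw).1),
      card_mul _ _ (1 + 1 + d) (fun w hw => (hb1b2W w hw).1),
      card_mul _ _ (1 + 1) (fun w hw => (hb1b2 w hw).1),
      card_mul _ _ 1 (fun w hw => (hb1 w hw).1)]
    simp [ell, hbcard]
  -- disjointness and support of the sum
  have d12 : Disjoint (b 3).coeff.support W.coeff.support := disj_of_inv hb3 hWi (Or.inr (by omega))
  have d13 : Disjoint (b 3).coeff.support (W * W).coeff.support := disj_of_inv hb3 hW2 (Or.inr (by omega))
  have d14 : Disjoint (b 3).coeff.support (W * b 2 * b 3 * W).coeff.support :=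
    disj_of_inv hb3 hX (Or.inl (by omega))
  have d15 : Disjoint (b 3).coeff.support (b 1 * b 2 * (W * W)).coeff.support :=
    disj_of_inv hb3 hY (Or.inr (by omega))
  have d16 : Disjoint (b 3).coeff.support (b 1 * b 2 * W * b 2 * b 3 * W).coeff.support :=
    disj_of_inv hb3 hZ (Or.inl (by omega))
  have d23 : Disjoint W.coeff.support (W * W).coeff.support := disj_of_inv hWi hW2 (Or.inl (by omega))
  have d24 : Disjoint W.coeff.support (W * b 2 * b 3 * W).coeff.support :=
    disj_of_inv hWi hX (Or.inr (by omega))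
  have d25 : Disjoint W.coeff.support (b 1 * b 2 * (W * W)).coeff.support :=
    disj_of_inv hWi hY (Or.inl (by omega))
  have d26 : Disjoint W.coeff.support (b 1 * b 2 * W * b 2 * b 3 * W).coeff.support :=
    disj_of_inv hWi hZ (Or.inr (by omega))
  have d34 : Disjoint (W * W).coeff.support (W * b 2 * b 3 * W).coeff.support :=
    disj_of_inv hW2 hX (Or.inr (by omega))
  have d35 : Disjoint (W * W).coeff.support (b 1 * b 2 * (W * W)).coeff.support :=
    disj_of_inv hW2 hY (Or.inl (by omega))
  have d36 : Disjoint (W * W).coeff.support (b 1 * b 2 * W * b 2 * b 3 * W).coeff.support :=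
    disj_of_inv hW2 hZ (Or.inr (by omega))
  have d45 : Disjoint (W * b 2 * b 3 * W).coeff.support (b 1 * b 2 * (W * W)).coeff.support :=
    disj_of_inv hX hY (Or.inr (by omega))
  have d46 : Disjoint (W * b 2 * b 3 * W).coeff.support (b 1 * b 2 * W * b 2 * b 3 * W).coeff.support :=
    disj_of_inv hX hZ (Or.inl (by omega))
  have d56 : Disjoint (b 1 * b 2 * (W * W)).coeff.support (b 1 * b 2 * W * b 2 * b 3 * W).coeff.support :=
    disj_of_inv hY hZ (Or.inr (by omega))
  have hsupp : (b 3 + W + W * W + W * b 2 * b 3 * W + b 1 * b 2 * (W * W) +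
      b 1 * b 2 * W * b 2 * b 3 * W).coeff.support
      = (b 3).coeff.support ∪ W.coeff.support ∪ (W * W).coeff.support ∪ (W * b 2 * b 3 * W).coeff.support ∪
        (b 1 * b 2 * (W * W)).coeff.support ∪ (b 1 * b 2 * W * b 2 * b 3 * W).coeff.support := by
    simp only [MonoidAlgebra.coeff_add]
    rw [Finsupp.support_add_eq, Finsupp.support_add_eq, Finsupp.support_add_eq,
      Finsupp.support_add_eq, Finsupp.support_add_eq]
    · exact d12
    · rw [Finsupp.support_add_eq d12]
      exact Finset.disjoint_union_left.mpr ⟨d13, d23⟩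
    · rw [Finsupp.support_add_eq, Finsupp.support_add_eq d12]
      · exact Finset.disjoint_union_left.mpr
          ⟨Finset.disjoint_union_left.mpr ⟨d14, d24⟩, d34⟩
      · rw [Finsupp.support_add_eq d12]
        exact Finset.disjoint_union_left.mpr ⟨d13, d23⟩
    · rw [Finsupp.support_add_eq, Finsupp.support_add_eq, Finsupp.support_add_eq d12]
      · exact Finset.disjoint_union_left.mpr
          ⟨Finset.disjoint_union_left.mpr
            ⟨Finset.disjoint_union_left.mpr ⟨d15, d25⟩, d35⟩, d45⟩
      · rw [Finsupp.support_add_eq d12]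
        exact Finset.disjoint_union_left.mpr ⟨d13, d23⟩
      · rw [Finsupp.support_add_eq, Finsupp.support_add_eq d12]
        · exact Finset.disjoint_union_left.mpr
            ⟨Finset.disjoint_union_left.mpr ⟨d14, d24⟩, d34⟩
        · rw [Finsupp.support_add_eq d12]
          exact Finset.disjoint_union_left.mpr ⟨d13, d23⟩
    · rw [Finsupp.support_add_eq, Finsupp.support_add_eq, Finsupp.support_add_eq,
        Finsupp.support_add_eq d12]
      · exact Finset.disjoint_union_left.mpr
          ⟨Finset.disjoint_union_left.mpr
            ⟨Finset.disjoint_union_left.mpr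
              ⟨Finset.disjoint_union_left.mpr ⟨d16, d26⟩, d36⟩, d46⟩, d56⟩
      · rw [Finsupp.support_add_eq d12]
        exact Finset.disjoint_union_left.mpr ⟨d13, d23⟩
      · rw [Finsupp.support_add_eq, Finsupp.support_add_eq d12]
        · exact Finset.disjoint_union_left.mpr
            ⟨Finset.disjoint_union_left.mpr ⟨d14, d24⟩, d34⟩
        · rw [Finsupp.support_add_eq d12]
          exact Finset.disjoint_union_left.mpr ⟨d13, d23⟩
      · rw [Finsupp.support_add_eq, Finsupp.support_add_eq, Finsupp.support_add_eq d12]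
        · exact Finset.disjoint_union_left.mpr
            ⟨Finset.disjoint_union_left.mpr
              ⟨Finset.disjoint_union_left.mpr ⟨d15, d25⟩, d35⟩, d45⟩
        · rw [Finsupp.support_add_eq d12]
          exact Finset.disjoint_union_left.mpr ⟨d13, d23⟩
        · rw [Finsupp.support_add_eq, Finsupp.support_add_eq d12]
          · exact Finset.disjoint_union_left.mpr
              ⟨Finset.disjoint_union_left.mpr ⟨d14, d24⟩, d34⟩
          · rw [Finsupp.support_add_eq d12]
            exact Finset.disjoint_union_left.mpr ⟨d13, d23⟩
  -- membership of the word [3]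
  have hof3 : FreeMonoid.of 3 ∈ (b 3).coeff.support := by
    rw [show (b 3).coeff.support = {FreeMonoid.of 3} from Finsupp.support_single_ne_zero _ one_ne_zero]
    simp
  have hc3 : countLetter 3 (FreeMonoid.of 3) = 1 := by
    simp [countLetter, FreeMonoid.toList_of]
  have hmem : FreeMonoid.of 3 ∈ (b 3 + W + W * W + W * b 2 * b 3 * W + b 1 * b 2 * (W * W) +
      b 1 * b 2 * W * b 2 * b 3 * W).coeff.support := by
    rw [hsupp]
    simp only [Finset.mem_union]
    tauto
  have hmax : maxLetter 3 (b 3 + W + W * W + W * b 2 * b 3 * W + b 1 * b 2 * (W * W) +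
      b 1 * b 2 * W * b 2 * b 3 * W) = 1 := by
    unfold maxLetter
    apply le_antisymm
    · apply Finset.sup_le
      intro w hw
      rw [hsupp] at hw
      simp only [Finset.mem_union] at hw
      rcases hw with ((((h | h) | h) | h) | h) | h
      · exact le_of_eq (hb3 w h).2
      · have := (hWi w h).2; omega
      · have := (hW2 w h).2; omega
      · have := (hX w h).2; omega
      · have := (hY w h).2; omega
      · have := (hZ w h).2; omega
    · exact le_trans (le_of_eq hc3.symm) (Finset.le_sup hmem)
  refine ⟨hmax, ?_, ⟨ell W * ell W, by ring⟩⟩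
  unfold tau
  rw [hmax, hsupp]
  rw [Finset.filter_union, Finset.filter_union, Finset.filter_union, Finset.filter_union,
    Finset.filter_union]
  rw [Finset.filter_true_of_mem (fun w hw => (hb3 w hw).2),
    Finset.filter_false_of_mem (s := W.coeff.support) (fun w hw => by have := (hWi w hw).2; omega),
    Finset.filter_false_of_mem (s := (W * W).coeff.support) (fun w hw => by have := (hW2 w hw).2; omega),
    Finset.filter_true_of_mem (fun w hw => by have := (hX w hw).2; omega),
    Finset.filter_false_of_mem (s := (b 1 * b 2 * (W * W)).coeff.support)
      (fun w hw => by have := (hY w hw).2; omega),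
    Finset.filter_true_of_mem (fun w hw => by have := (hZ w hw).2; omega)]
  rw [Finset.union_empty, Finset.union_empty, Finset.union_empty]
  rw [Finset.card_union_of_disjoint (Finset.disjoint_union_left.mpr ⟨d16, d46⟩),
    Finset.card_union_of_disjoint d14, hbcard, cX, cZ]
  ring
end
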